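/- arXiv:quant-ph/0605213 — 2 statements merged into one kernel-verified Lean document; each statement's English description precedes it below -/
import Mathlib

section
/- For every POVM {E_α} (a finite family of positive semidefinite operators with Σ_α E_α = 1) on a finite-dimensional complex Hilbert space and any two density matrices ρ0, ρ1, the fidelity satisfies F(ρ0, ρ1) ≤ Σ_α √( tr(ρ0 E_α) · tr(ρ1 E_α) ); i.e., the fidelity is a lower bound for the Bhattacharyya overlap of the outcome distributions p_i(α) = tr(ρ_i E_α) of any POVM measurement. -/
open Matrix Kronecker
open scoped ComplexOrder

-- Positive semidefinite square root (zero if not PSD).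
open Classical in
noncomputable def psqrt {n : Type*} [Fintype n] [DecidableEq n] (A : Matrix n n ℂ) :
    Matrix n n ℂ :=
  if h : A.PosSemidef then
    (h.1.eigenvectorUnitary : Matrix n n ℂ) * diagonal (((↑) : ℝ → ℂ) ∘ Real.sqrt ∘ h.1.eigenvalues) *
      (star h.1.eigenvectorUnitary : Matrix n n ℂ)
  else 0

/-- Fidelity F(ρ0,ρ1) = tr √(√ρ0 ρ1 √ρ0). -/
noncomputable def fidelity {n : Type*} [Fintype n] [DecidableEq n] (ρ0 ρ1 : Matrix n n ℂ) : ℝ :=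
  (psqrt (psqrt ρ0 * ρ1 * psqrt ρ0)).trace.re

/-- Operator (ℓ²→ℓ²) norm of a matrix. -/
noncomputable def opNorm {n : Type*} [Fintype n] [DecidableEq n] (A : Matrix n n ℂ) : ℝ :=
  ‖LinearMap.toContinuousLinearMap (Matrix.toEuclideanLin A)‖

/-- Partial trace over the right (second) factor. -/
noncomputable def ptraceRight {m n : Type*} [Fintype m] [Fintype n]
    (ρ : Matrix (m × n) (m × n) ℂ) : Matrix m m ℂ :=
  Matrix.of fun i j => ∑ k, ρ (i, k) (j, k)

/-- Partial trace over the left (first) factor. -/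
noncomputable def ptraceLeft {m n : Type*} [Fintype m] [Fintype n]
    (ρ : Matrix (m × n) (m × n) ℂ) : Matrix n n ℂ :=
  Matrix.of fun i j => ∑ k, ρ (k, i) (k, j)

noncomputable def Matrix.PosSemidef.sqrt {n : Type*} [Fintype n] [DecidableEq n]
    {A : Matrix n n ℂ} (h : A.PosSemidef) : Matrix n n ℂ :=
  (h.1.eigenvectorUnitary : Matrix n n ℂ) * diagonal (((↑) : ℝ → ℂ) ∘ Real.sqrt ∘ h.1.eigenvalues) *
      (star h.1.eigenvectorUnitary : Matrix n n ℂ)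

lemma Matrix.PosSemidef.posSemidef_sqrt {n : Type*} [Fintype n] [DecidableEq n]
    {A : Matrix n n ℂ} (h : A.PosSemidef) : h.sqrt.PosSemidef := by
  unfold Matrix.PosSemidef.sqrt
  have hd : (diagonal (((↑) : ℝ → ℂ) ∘ Real.sqrt ∘ h.1.eigenvalues)).PosSemidef := by
    rw [posSemidef_diagonal_iff]
    intro i
    simp [Complex.zero_le_real, Real.sqrt_nonneg]
  have := hd.mul_mul_conjTranspose_same (h.1.eigenvectorUnitary : Matrix n n ℂ)
  rw [star_eq_conjTranspose]
  exact this

lemma Matrix.PosSemidef.sqrt_mul_self {n : Type*} [Fintype n] [DecidableEq n]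
    {A : Matrix n n ℂ} (h : A.PosSemidef) : h.sqrt * h.sqrt = A := by
  unfold Matrix.PosSemidef.sqrt
  have huu : (star h.1.eigenvectorUnitary : Matrix n n ℂ) *
      (h.1.eigenvectorUnitary : Matrix n n ℂ) = 1 := Unitary.coe_star_mul_self _
  conv_rhs => rw [h.1.spectral_theorem, Unitary.conjStarAlgAut_apply]
  simp only [mul_assoc]
  rw [← mul_assoc (star h.1.eigenvectorUnitary : Matrix n n ℂ) _ _, huu, one_mul,
    ← mul_assoc (diagonal _) (diagonal _), diagonal_mul_diagonal]
  congr 3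
  funext i
  simp only [Function.comp_apply]
  rw [← Complex.ofReal_mul, Real.mul_self_sqrt (h.eigenvalues_nonneg i)]
  rfl

lemma psqrt_eq {n : Type*} [Fintype n] [DecidableEq n] {A : Matrix n n ℂ} (h : A.PosSemidef) :
    psqrt A = h.sqrt := dif_pos h

lemma trace_re_nonneg {n : Type*} [Fintype n] [DecidableEq n] {M : Matrix n n ℂ}
    (hM : M.PosSemidef) : 0 ≤ M.trace.re := by
  have hdiag : ∀ i, 0 ≤ (M i i).re := by
    intro i
    have h := hM.diag_nonneg (i := i)
    exact (Complex.le_def.mp h).1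
  rw [Matrix.trace]
  rw [Complex.re_sum]
  exact Finset.sum_nonneg fun i _ => hdiag i

noncomputable def toE {n : Type*} [Fintype n] (X : Matrix n n ℂ) : EuclideanSpace ℂ (n × n) :=
  WithLp.toLp 2 (fun p => X p.2 p.1)

lemma trace_eq_inner {n : Type*} [Fintype n] [DecidableEq n] (X Y : Matrix n n ℂ) :
    (Xᴴ * Y).trace = inner ℂ (toE X) (toE Y) := by
  simp [Matrix.trace, Matrix.diag, Matrix.mul_apply, Matrix.conjTranspose_apply, toE,
    PiLp.inner_apply, PiLp.toLp_apply, RCLike.inner_apply, Fintype.sum_prod_type]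
  exact Finset.sum_congr rfl fun _ _ => Finset.sum_congr rfl fun _ _ => mul_comm _ _

lemma trace_cs {n : Type*} [Fintype n] [DecidableEq n] (X Y : Matrix n n ℂ) :
    ‖(Xᴴ * Y).trace‖ ≤
      Real.sqrt ((Xᴴ * X).trace.re) * Real.sqrt ((Yᴴ * Y).trace.re) := by
  have h := norm_inner_le_norm (𝕜 := ℂ) (toE X) (toE Y)
  rw [norm_eq_sqrt_re_inner (𝕜 := ℂ) (toE X), norm_eq_sqrt_re_inner (𝕜 := ℂ) (toE Y)] at h
  rw [trace_eq_inner, trace_eq_inner X X, trace_eq_inner Y Y]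
  simpa using h

lemma sandwich {n : Type*} [Fintype n] [DecidableEq n] (u : Matrix n n ℂ)
    (huu : star u * u = 1) (D1 D2 : Matrix n n ℂ) :
    (u * D1 * star u) * (u * D2 * star u) = u * (D1 * D2) * star u := by
  simp only [mul_assoc]
  rw [← mul_assoc (star u) u (D2 * star u), huu, one_mul]


set_option maxHeartbeats 1000000 in
/-- The fidelity is a lower bound for the Bhattacharyya overlap of the
outcome distributions of any POVM measurement. -/
theorem fidelity_le_povm_overlap {n : Type*} [Fintype n] [DecidableEq n]
    (ρ0 ρ1 : Matrix n n ℂ) (h0 : ρ0.PosSemidef) (h0t : ρ0.trace = 1)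
    (h1 : ρ1.PosSemidef) (h1t : ρ1.trace = 1)
    (k : ℕ) (E : Fin k → Matrix n n ℂ)
    (hE : ∀ α, (E α).PosSemidef) (hEsum : ∑ α, E α = 1) :
    fidelity ρ0 ρ1 ≤ ∑ α, Real.sqrt ((ρ0 * E α).trace.re * (ρ1 * E α).trace.re) := by
  classical
  set A := h0.sqrt with hAdef
  clear_value A
  set B := h1.sqrt with hBdef
  clear_value B
  have hA : A.PosSemidef := hAdef ▸ h0.posSemidef_sqrt
  have hB : B.PosSemidef := hBdef ▸ h1.posSemidef_sqrt
  have hAH : Aᴴ = A := hA.1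
  have hBH : Bᴴ = B := hB.1
  have hAA : A * A = ρ0 := hAdef ▸ h0.sqrt_mul_self
  have hBB : B * B = ρ1 := hBdef ▸ h1.sqrt_mul_self
  set M := B * A with hMdef
  clear_value M
  have hMH : Mᴴ = A * B := by rw [hMdef, conjTranspose_mul, hAH, hBH]
  set H := A * ρ1 * A with hHdef
  clear_value H
  have keyH : Mᴴ * M = H := by
    rw [hMH, hMdef, hHdef, ← hBB]; noncomm_ring
  have hH : H.PosSemidef := keyH ▸ posSemidef_conjTranspose_mul_self M
  have hfid : fidelity ρ0 ρ1 = hH.sqrt.trace.re := by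
    unfold fidelity
    rw [psqrt_eq h0, ← hAdef, ← hHdef, psqrt_eq hH]
  have hH1 : H.IsHermitian := hH.1
  set u : Matrix n n ℂ := ↑(hH1.eigenvectorUnitary) with hudef
  set ev : n → ℝ := hH1.eigenvalues with hevdef
  have hev : ∀ i, 0 ≤ ev i := hevdef ▸ hH.eigenvalues_nonneg
  have hustar : (star hH1.eigenvectorUnitary : Matrix n n ℂ) = star u := rfl
  have huu : star u * u = 1 := by
    rw [hudef, ← hustar]
    exact Unitary.coe_star_mul_self hH1.eigenvectorUnitary
  have hdg : ∀ (f1 f2 : n → ℂ), (∀ i, f1 i = f2 i) →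
      u * diagonal f1 * star u = u * diagonal f2 * star u := by
    intro f1 f2 h
    rw [funext h]
  have hspec : H = u * diagonal (RCLike.ofReal ∘ ev) * star u := by
    have h := hH1.spectral_theorem
    rw [Unitary.conjStarAlgAut_apply, hustar] at h
    exact h
  have hsqrt : hH.sqrt = u * diagonal ((↑) ∘ Real.sqrt ∘ ev) * star u := by
    have h : hH.sqrt = u * diagonal ((↑) ∘ Real.sqrt ∘ hH1.eigenvalues) *
        (star hH1.eigenvectorUnitary : Matrix n n ℂ) := rfl
    rw [h, hustar]
  clear_value u ev
  set g : n → ℂ := fun i => ((((Real.sqrt (ev i))⁻¹ : ℝ) : ℂ)) with hgdef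
  clear_value g
  have hg1 : ∀ i, g i * (RCLike.ofReal ∘ ev) i = (((↑) : ℝ → ℂ) ∘ Real.sqrt ∘ ev) i := by
    intro i
    simp only [hgdef, Function.comp_apply]
    set s := Real.sqrt (ev i) with hs
    have hss : s * s = ev i := Real.mul_self_sqrt (hev i)
    clear_value s
    rw [show (RCLike.ofReal (ev i) : ℂ) = ((ev i : ℝ) : ℂ) from rfl]
    rw [← Complex.ofReal_mul]
    congr 1
    rcases eq_or_lt_of_le (hev i) with h | h
    · have hs0 : s = 0 := by nlinarith [hss]
      simp [hs0]
    · have hsne : s ≠ 0 := by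
        intro h0
        rw [h0] at hss
        simp at hss
        exact absurd hss.symm (ne_of_gt h)
      rw [← hss, ← mul_assoc, inv_mul_cancel₀ hsne, one_mul]
  have hg2 : ∀ i, (g i * g i) * (RCLike.ofReal ∘ ev) i * (g i * g i) = g i * g i := by
    intro i
    simp only [hgdef, Function.comp_apply]
    set s := Real.sqrt (ev i) with hs
    have hss : s * s = ev i := Real.mul_self_sqrt (hev i)
    clear_value s
    rw [show (RCLike.ofReal (ev i) : ℂ) = ((ev i : ℝ) : ℂ) from rfl]
    rw [← hss]
    push_cast
    rcases eq_or_ne s 0 with h | h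
    · simp [h]
    · have hne : (s : ℂ) ≠ 0 := by exact_mod_cast h
      field_simp
  set P := u * diagonal g * star u with hPdef
  clear_value P
  set W := P * Mᴴ with hWdef
  clear_value W
  have hWM : W * M = hH.sqrt := by
    rw [hWdef, mul_assoc, keyH, hsqrt]
    conv_lhs => rw [hPdef, hspec]
    rw [sandwich u huu, diagonal_mul_diagonal]
    exact hdg _ _ hg1
  -- the contraction property of W
  have hgstar : star g = g := by
    funext i
    simp [hgdef]
  have hPH' : Pᴴ = P := by
    rw [hPdef]
    simp only [conjTranspose_mul, diagonal_conjTranspose, hgstar,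
      star_eq_conjTranspose, conjTranspose_conjTranspose, mul_assoc]
  have hWH : Wᴴ = M * P := by
    rw [hWdef, conjTranspose_mul, conjTranspose_conjTranspose, hPH']
  have keyH' : (P * P) * (Mᴴ * M) * (P * P) = P * P := by
    rw [keyH]
    conv_lhs => rw [hPdef, hspec]
    conv_rhs => rw [hPdef]
    simp only [sandwich u huu, diagonal_mul_diagonal]
    exact hdg _ _ (fun i => by simpa using hg2 i)
  have e1 : Wᴴ * W = M * (P * P) * Mᴴ := by
    rw [hWH, hWdef]; noncomm_ring
  have hmid : (Wᴴ * W) * (Wᴴ * W) = Wᴴ * W := by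
    rw [e1]
    calc M * (P * P) * Mᴴ * (M * (P * P) * Mᴴ)
        = M * ((P * P) * (Mᴴ * M) * (P * P)) * Mᴴ := by noncomm_ring
      _ = M * (P * P) * Mᴴ := by rw [keyH']
  have hTH : (Wᴴ * W)ᴴ = Wᴴ * W := by
    rw [conjTranspose_mul, conjTranspose_conjTranspose]
  have hT : (1 - Wᴴ * W).PosSemidef := by
    have h1 : (1 - Wᴴ * W) = (1 - Wᴴ * W)ᴴ * (1 - Wᴴ * W) := by
      rw [conjTranspose_sub, conjTranspose_one, hTH]
      have h2 : (1 - Wᴴ * W) * (1 - Wᴴ * W)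
          = 1 - Wᴴ * W - ((Wᴴ * W) - (Wᴴ * W) * (Wᴴ * W)) := by noncomm_ring
      rw [h2, hmid, sub_self, sub_zero]
    rw [h1]
    exact posSemidef_conjTranspose_mul_self _
  -- per-measurement-element bound
  have key : ∀ α, ((W * (B * (E α * A))).trace).re ≤
      Real.sqrt ((ρ0 * E α).trace.re * (ρ1 * E α).trace.re) := by
    intro α
    set C := (hE α).sqrt with hCdef
    clear_value C
    have hC : C.PosSemidef := hCdef ▸ (hE α).posSemidef_sqrt
    have hCH : Cᴴ = C := hC.1
    have hCC : C * C = E α := hCdef ▸ (hE α).sqrt_mul_self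
    set X := A * C with hXdef
    clear_value X
    set Y := W * (B * C) with hYdef
    clear_value Y
    have hXH : Xᴴ = C * A := by rw [hXdef, conjTranspose_mul, hAH, hCH]
    have htr : (Xᴴ * Y).trace = (W * (B * (E α * A))).trace := by
      rw [hXH, hYdef, trace_mul_comm (C * A) (W * (B * C))]
      congr 1
      rw [← hCC]
      noncomm_ring
    have ha : (Xᴴ * X).trace = (ρ0 * E α).trace := by
      rw [trace_mul_comm Xᴴ X, hXH, hXdef]
      have e : A * C * (C * A) = A * (E α) * A := by rw [← hCC]; noncomm_ring
      rw [e, trace_mul_comm (A * E α) A, ← mul_assoc, hAA]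
    have hann : 0 ≤ (ρ0 * E α).trace.re := by
      rw [← ha]
      exact trace_re_nonneg (posSemidef_conjTranspose_mul_self X)
    have hb' : (Yᴴ * Y).trace.re ≤ (ρ1 * E α).trace.re := by
      have hps : ((B * C)ᴴ * (1 - Wᴴ * W) * (B * C)).PosSemidef :=
        hT.conjTranspose_mul_mul_same (B * C)
      have hEq : (B * C)ᴴ * (1 - Wᴴ * W) * (B * C) = C * ρ1 * C - Yᴴ * Y := by
        rw [conjTranspose_mul, hBH, hCH, hYdef, conjTranspose_mul, conjTranspose_mul, hBH, hCH,
          ← hBB]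
        noncomm_ring
      have h2 : (C * ρ1 * C).trace = (ρ1 * E α).trace := by
        rw [trace_mul_comm (C * ρ1) C, ← mul_assoc, hCC, trace_mul_comm (E α) ρ1]
      have h3 := trace_re_nonneg hps
      rw [hEq, trace_sub, Complex.sub_re, h2] at h3
      linarith
    have hcs := trace_cs X Y
    calc ((W * (B * (E α * A))).trace).re = ((Xᴴ * Y).trace).re := by rw [htr]
      _ ≤ ‖(Xᴴ * Y).trace‖ := Complex.re_le_norm _
      _ ≤ Real.sqrt ((Xᴴ * X).trace.re) * Real.sqrt ((Yᴴ * Y).trace.re) := hcs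
      _ ≤ Real.sqrt ((ρ0 * E α).trace.re) * Real.sqrt ((ρ1 * E α).trace.re) := by
          rw [ha]
          exact mul_le_mul_of_nonneg_left (Real.sqrt_le_sqrt hb') (Real.sqrt_nonneg _)
      _ = Real.sqrt ((ρ0 * E α).trace.re * (ρ1 * E α).trace.re) :=
          (Real.sqrt_mul hann _).symm
  -- assemble
  have hdecomp : hH.sqrt.trace = ∑ α, (W * (B * (E α * A))).trace := by
    rw [← hWM, hMdef]
    have e : W * (B * A) = ∑ α, W * (B * (E α * A)) := by
      calc W * (B * A) = W * (B * ((∑ α, E α) * A)) := by rw [hEsum, one_mul]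
        _ = ∑ α, W * (B * (E α * A)) := by
            rw [Finset.sum_mul, Finset.mul_sum, Finset.mul_sum]
    rw [e, trace_sum]
  rw [hfid, hdecomp, Complex.re_sum]
  exact Finset.sum_le_sum fun α _ => key α
end

section
/- (Monotonicity of fidelity under partial trace.) Let H_A and H_E be finite-dimensional complex Hilbert spaces and let ρ0, ρ1 be density matrices on H_A ⊗ H_E. Then F(ρ0^A, ρ1^A) ≥ F(ρ0, ρ1), where ρ_i^A denotes the partial trace of ρ_i over H_E; i.e., taking the partial trace does not decrease the fidelity. -/
open Matrix Kronecker
open scoped ComplexOrder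

set_option linter.unusedSectionVars false

namespace FidAux
open Matrix

variable {l : Type*} [Fintype l] [DecidableEq l]

open scoped MatrixOrder in
lemma psqrt_eq_sqrt {A : Matrix l l ℂ} (hA : A.PosSemidef) : psqrt A = CFC.sqrt A := by
  rw [CFC.sqrt_eq_real_sqrt A hA.nonneg, cfcₙ_eq_cfc, hA.1.cfc_eq, IsHermitian.cfc,
    Unitary.conjStarAlgAut_apply, psqrt, dif_pos hA]
  rfl

open scoped MatrixOrder in
lemma psqrt_unique {A B : Matrix l l ℂ} (hB : B.PosSemidef) (h : B * B = A) :
    psqrt A = B := by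
  have hA : A.PosSemidef := h ▸ (by simpa [← h, pow_two] using hB.pow 2)
  rw [psqrt_eq_sqrt hA]; exact CFC.sqrt_unique h hB.nonneg

open scoped MatrixOrder in
lemma psqrt_posSemidef {A : Matrix l l ℂ} (hA : A.PosSemidef) : (psqrt A).PosSemidef := by
  rw [psqrt_eq_sqrt hA]; exact (CFC.sqrt_nonneg A).posSemidef

open scoped MatrixOrder in
lemma psqrt_mul_self {A : Matrix l l ℂ} (hA : A.PosSemidef) : psqrt A * psqrt A = A := by
  rw [psqrt_eq_sqrt hA]; exact CFC.sqrt_mul_sqrt_self A hA.nonneg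

lemma psqrt_herm {A : Matrix l l ℂ} (hA : A.PosSemidef) : (psqrt A)ᴴ = psqrt A :=
  (psqrt_posSemidef hA).1

/-- Polar decomposition of a square matrix, with contraction factor. -/
lemma polar (T : Matrix l l ℂ) :
    ∃ V : Matrix l l ℂ,
      T = V * psqrt (Tᴴ * T) ∧
      Vᴴ * V * psqrt (Tᴴ * T) = psqrt (Tᴴ * T) ∧
      (1 - Vᴴ * V).PosSemidef ∧ (1 - V * Vᴴ).PosSemidef := by
  have hH : (Tᴴ * T).PosSemidef := posSemidef_conjTranspose_mul_self T
  set U : Matrix l l ℂ := (hH.1.eigenvectorUnitary : Matrix l l ℂ) with hUdef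
  have hUmem := (hH.1.eigenvectorUnitary).2
  have hUU : Uᴴ * U = 1 := by
    simpa [star_eq_conjTranspose] using (Matrix.mem_unitaryGroup_iff').mp hUmem
  have hUU' : U * Uᴴ = 1 := by
    simpa [star_eq_conjTranspose] using (Matrix.mem_unitaryGroup_iff).mp hUmem
  set ev : l → ℝ := hH.1.eigenvalues with hevdef
  have hev0 : ∀ i, 0 ≤ ev i := hH.eigenvalues_nonneg
  set dg : Matrix l l ℂ := diagonal (fun i => (ev i : ℂ)) with hdgdef
  have hspec : Tᴴ * T = U * dg * Uᴴ := by
    have := hH.1.spectral_theorem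
    exact this
  set D : Matrix l l ℂ := diagonal (fun i => (Real.sqrt (ev i) : ℂ)) with hDdef
  set Dinv : Matrix l l ℂ :=
    diagonal (fun i => if ev i = 0 then 0 else ((Real.sqrt (ev i) : ℂ))⁻¹) with hDinvdef
  set E : Matrix l l ℂ := diagonal (fun i => if ev i = 0 then (0 : ℂ) else 1) with hEdef
  set F : Matrix l l ℂ := diagonal (fun i => if ev i = 0 then (0 : ℂ) else ((ev i : ℂ))⁻¹)
    with hFdef
  set P : Matrix l l ℂ := U * D * Uᴴ with hPdef
  set V : Matrix l l ℂ := T * U * Dinv * Uᴴ with hVdef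
  have hsqrt_ne : ∀ i, ev i ≠ 0 → (Real.sqrt (ev i) : ℂ) ≠ 0 := by
    intro i h
    have : (0:ℝ) < ev i := lt_of_le_of_ne (hev0 i) (Ne.symm h)
    simp [Real.sqrt_ne_zero'.mpr this]
  -- bare diagonal computations
  have hDD : D * D = dg := by
    rw [hDdef, hdgdef, diagonal_mul_diagonal]
    refine congrArg diagonal (funext fun i => ?_)
    rw [← Complex.ofReal_mul, Real.mul_self_sqrt (hev0 i)]
  have hDinvD : Dinv * D = E := by
    rw [hDinvdef, hDdef, hEdef, diagonal_mul_diagonal]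
    refine congrArg diagonal (funext fun i => ?_)
    by_cases h : ev i = 0
    · simp [h]
    · simp [h, inv_mul_cancel₀ (hsqrt_ne i h)]
  have hED : E * D = D := by
    rw [hEdef, hDdef, diagonal_mul_diagonal]
    refine congrArg diagonal (funext fun i => ?_)
    by_cases h : ev i = 0
    · simp [h, Real.sqrt_eq_zero', le_of_eq h.symm]
    · simp [h]
  have hDinvDinv : Dinv * Dinv = F := by
    rw [hDinvdef, hFdef, diagonal_mul_diagonal]
    refine congrArg diagonal (funext fun i => ?_)
    by_cases h : ev i = 0
    · simp [h]
    · have : ((ev i : ℂ)) = (Real.sqrt (ev i) : ℂ) * (Real.sqrt (ev i) : ℂ) := by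
        rw [← Complex.ofReal_mul, Real.mul_self_sqrt (hev0 i)]
      simp [h, this, mul_inv]
  have hFdgF : F * dg * F = F := by
    rw [hFdef, hdgdef, diagonal_mul_diagonal, diagonal_mul_diagonal]
    refine congrArg diagonal (funext fun i => ?_)
    by_cases h : ev i = 0
    · simp [h]
    · simp [h]
  have hDinvdgDinv : Dinv * dg * Dinv = E := by
    rw [hDinvdef, hdgdef, hEdef, diagonal_mul_diagonal, diagonal_mul_diagonal]
    refine congrArg diagonal (funext fun i => ?_)
    by_cases h : ev i = 0
    · simp [h]
    · have heq : ((ev i : ℂ)) = (Real.sqrt (ev i) : ℂ) * (Real.sqrt (ev i) : ℂ) := by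
        rw [← Complex.ofReal_mul, Real.mul_self_sqrt (hev0 i)]
      have hs := hsqrt_ne i h
      simp only [h, if_false, heq]
      field_simp
  have hDinvH : Dinvᴴ = Dinv := by
    rw [hDinvdef, diagonal_conjTranspose]
    refine congrArg diagonal (funext fun i => ?_)
    by_cases h : ev i = 0 <;> simp [h, Pi.star_apply, ← Complex.ofReal_inv]
  -- chain rewriting lemmas
  have hc1 : ∀ X : Matrix l l ℂ, Uᴴ * (U * X) = X := fun X => by
    rw [← Matrix.mul_assoc, hUU, Matrix.one_mul]
  have hc3 : ∀ X : Matrix l l ℂ, U * (Uᴴ * X) = X := fun X => by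
    rw [← Matrix.mul_assoc, hUU', Matrix.one_mul]
  have htt : ∀ X : Matrix l l ℂ, Tᴴ * (T * X) = U * (dg * (Uᴴ * X)) := fun X => by
    rw [← Matrix.mul_assoc, hspec]; simp only [Matrix.mul_assoc]
  have hdd : ∀ X : Matrix l l ℂ, D * (D * X) = dg * X := fun X => by
    rw [← Matrix.mul_assoc, hDD]
  have hd1 : ∀ X : Matrix l l ℂ, Dinv * (D * X) = E * X := fun X => by
    rw [← Matrix.mul_assoc, hDinvD]
  have hed : ∀ X : Matrix l l ℂ, E * (D * X) = D * X := fun X => by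
    rw [← Matrix.mul_assoc, hED]
  have hde : ∀ X : Matrix l l ℂ, Dinv * (dg * (Dinv * X)) = E * X := fun X => by
    rw [← Matrix.mul_assoc, ← Matrix.mul_assoc, hDinvdgDinv]
  have hdinv2 : ∀ X : Matrix l l ℂ, Dinv * (Dinv * X) = F * X := fun X => by
    rw [← Matrix.mul_assoc, hDinvDinv]
  have hff : ∀ X : Matrix l l ℂ, F * (dg * (F * X)) = F * X := fun X => by
    rw [← Matrix.mul_assoc, ← Matrix.mul_assoc, hFdgF]
  -- P is the square root
  have hPpsd : P.PosSemidef := by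
    have hDpsd : D.PosSemidef := by
      refine PosSemidef.diagonal fun i => ?_
      simp only [Pi.zero_apply]
      rw [Complex.zero_le_real]
      exact Real.sqrt_nonneg _
    simpa [hPdef] using hDpsd.mul_mul_conjTranspose_same U
  have hPP : P * P = Tᴴ * T := by
    rw [hPdef, hspec]
    simp only [Matrix.mul_assoc]
    rw [hc1, ← Matrix.mul_assoc D D, hDD]
  have hP : psqrt (Tᴴ * T) = P := psqrt_unique hPpsd hPP
  -- columns of T*U with zero eigenvalue vanish
  have hTUdiag : (T * U)ᴴ * (T * U) = dg := by
    rw [conjTranspose_mul]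
    simp only [Matrix.mul_assoc]
    rw [htt, hc1, hUU, Matrix.mul_one]
  have hTU0 : ∀ j, ev j = 0 → ∀ a, (T * U) a j = 0 := by
    intro j hj a
    have h1 : ((T * U)ᴴ * (T * U)) j j = 0 := by
      rw [hTUdiag, hdgdef]; simp [hj]
    rw [mul_apply] at h1
    simp only [conjTranspose_apply, RCLike.star_def, ← Complex.normSq_eq_conj_mul_self] at h1
    rw [← Complex.ofReal_sum, Complex.ofReal_eq_zero] at h1
    have h3 := Finset.sum_eq_zero_iff_of_nonneg
      (fun i _ => Complex.normSq_nonneg ((T * U) i j)) |>.mp h1 a (Finset.mem_univ a)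
    exact Complex.normSq_eq_zero.mp h3
  have hTUE : T * U * E = T * U := by
    ext a j
    rw [hEdef, mul_diagonal]
    by_cases h : ev j = 0
    · simp [h, hTU0 j h a]
    · simp [h]
  have htue : ∀ X : Matrix l l ℂ, T * (U * (E * X)) = T * (U * X) := fun X => by
    rw [← Matrix.mul_assoc, ← Matrix.mul_assoc, hTUE, Matrix.mul_assoc]
  have hVP : T = V * P := by
    rw [hVdef, hPdef]
    simp only [Matrix.mul_assoc]
    rw [hc1, hd1, htue, hUU', Matrix.mul_one]
  have hVhV : Vᴴ * V = U * (E * Uᴴ) := by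
    rw [hVdef]
    simp only [conjTranspose_mul, conjTranspose_conjTranspose, hDinvH]
    simp only [Matrix.mul_assoc]
    rw [htt, hc1, hc1, hde]
  refine ⟨V, ?_, ?_, ?_, ?_⟩
  · rw [hP]; exact hVP
  · rw [hP, hVhV, hPdef]
    simp only [Matrix.mul_assoc]
    rw [hc1, hed]
  · rw [hVhV]
    have hpsd : (diagonal (fun i => if ev i = 0 then (1:ℂ) else 0)).PosSemidef := by
      refine PosSemidef.diagonal fun i => ?_
      simp only [Pi.zero_apply]
      by_cases h : ev i = 0 <;> simp [h, zero_le_one]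
    have heq : U * diagonal (fun i => if ev i = 0 then (1:ℂ) else 0) * Uᴴ
        = 1 - U * (E * Uᴴ) := by
      have h1E : diagonal (fun i => if ev i = 0 then (1:ℂ) else 0) = 1 - E := by
        rw [hEdef, ← diagonal_one, diagonal_sub]
        refine congrArg diagonal (funext fun i => ?_)
        by_cases h : ev i = 0 <;> simp [h]
      rw [h1E, Matrix.mul_sub, Matrix.sub_mul, Matrix.mul_one, hUU', Matrix.mul_assoc]
    rw [← heq]
    exact hpsd.mul_mul_conjTranspose_same U
  · -- 1 - V * Vᴴ is PSD since V * Vᴴ is a hermitian idempotent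
    have hVVh : V * Vᴴ = T * (U * (F * (Uᴴ * Tᴴ))) := by
      rw [hVdef]
      simp only [conjTranspose_mul, conjTranspose_conjTranspose, hDinvH]
      simp only [Matrix.mul_assoc]
      rw [hc1, hdinv2]
    have hQ2 : (V * Vᴴ) * (V * Vᴴ) = V * Vᴴ := by
      rw [hVVh]
      simp only [Matrix.mul_assoc]
      rw [htt, hc1, hc1, hff]
    have hQH : (V * Vᴴ)ᴴ = V * Vᴴ := by
      rw [conjTranspose_mul, conjTranspose_conjTranspose]
    have key : (1 - V * Vᴴ)ᴴ * (1 - V * Vᴴ) = 1 - V * Vᴴ := by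
      rw [conjTranspose_sub, conjTranspose_one, hQH]
      rw [Matrix.sub_mul, Matrix.mul_sub, Matrix.mul_sub, hQ2]
      simp [Matrix.mul_one, Matrix.one_mul]
    rw [← key]
    exact posSemidef_conjTranspose_mul_self _


lemma trace_self_re (A : Matrix l l ℂ) :
    (Aᴴ * A).trace.re = ∑ p : l × l, ‖A p.2 p.1‖ ^ 2 := by
  rw [Matrix.trace, Complex.re_sum, Fintype.sum_prod_type]
  refine Finset.sum_congr rfl fun j _ => ?_
  rw [Matrix.diag]
  rw [mul_apply, Complex.re_sum]
  refine Finset.sum_congr rfl fun i _ => ?_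
  rw [conjTranspose_apply, RCLike.star_def, ← Complex.normSq_eq_conj_mul_self,
    Complex.ofReal_re, Complex.sq_norm]

lemma trace_cauchy_schwarz (A B : Matrix l l ℂ) :
    ‖(Aᴴ * B).trace‖ ≤
      Real.sqrt ((Aᴴ * A).trace.re) * Real.sqrt ((Bᴴ * B).trace.re) := by
  have h1 : (Aᴴ * B).trace = ∑ p : l × l, (starRingEnd ℂ) (A p.2 p.1) * B p.2 p.1 := by
    rw [Matrix.trace, Fintype.sum_prod_type]
    refine Finset.sum_congr rfl fun j _ => ?_
    rw [Matrix.diag, mul_apply]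
    exact Finset.sum_congr rfl fun i _ => by rw [conjTranspose_apply, RCLike.star_def]
  rw [h1, trace_self_re A, trace_self_re B]
  calc ‖∑ p : l × l, (starRingEnd ℂ) (A p.2 p.1) * B p.2 p.1‖
      ≤ ∑ p : l × l, ‖(starRingEnd ℂ) (A p.2 p.1) * B p.2 p.1‖ :=
        norm_sum_le _ _
    _ = ∑ p : l × l, ‖A p.2 p.1‖ * ‖B p.2 p.1‖ := by
        refine Finset.sum_congr rfl fun p _ => ?_
        rw [norm_mul, Complex.norm_conj]
    _ ≤ _ := Real.sum_mul_le_sqrt_mul_sqrt _ _ _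

lemma trace_re_nonneg {A : Matrix l l ℂ} (hA : A.PosSemidef) : 0 ≤ A.trace.re := by
  rw [Matrix.trace, Complex.re_sum]
  refine Finset.sum_nonneg fun i _ => ?_
  simpa using (Complex.le_def.mp (hA.diag_nonneg (i := i))).1

/-- Hardness core: square case. -/
lemma key (R1 R2 : Matrix l l ℂ) :
    ((R1ᴴ * R2).trace).re ≤ fidelity (R1ᴴ * R1) (R2ᴴ * R2) := by
  have hA : (R1ᴴ * R1).PosSemidef := posSemidef_conjTranspose_mul_self R1
  have hB : (R2ᴴ * R2).PosSemidef := posSemidef_conjTranspose_mul_self R2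
  obtain ⟨V1, hV1, -, -, hV1c⟩ := polar R1
  obtain ⟨V2, hV2, -, hV2c, -⟩ := polar R2
  obtain ⟨SA, hSA⟩ : ∃ X, X = psqrt (R1ᴴ * R1) := ⟨_, rfl⟩
  obtain ⟨SB, hSB⟩ : ∃ X, X = psqrt (R2ᴴ * R2) := ⟨_, rfl⟩
  rw [← hSA] at hV1
  rw [← hSB] at hV2
  have hSAH : SAᴴ = SA := by rw [hSA]; exact psqrt_herm hA
  have hSBH : SBᴴ = SB := by rw [hSB]; exact psqrt_herm hB
  have hSB2 : SB * SB = R2ᴴ * R2 := by rw [hSB]; exact psqrt_mul_self hB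
  obtain ⟨K, hK⟩ : ∃ X, X = V1ᴴ * V2 := ⟨_, rfl⟩
  have hKc : (1 - Kᴴ * K).PosSemidef := by
    have h1 : (V2ᴴ * (1 - V1 * V1ᴴ) * V2).PosSemidef := hV1c.conjTranspose_mul_mul_same V2
    have heq : 1 - Kᴴ * K = V2ᴴ * (1 - V1 * V1ᴴ) * V2 + (1 - V2ᴴ * V2) := by
      rw [hK, conjTranspose_mul, conjTranspose_conjTranspose]
      noncomm_ring
    rw [heq]
    exact h1.add hV2c
  have hTT : (SB * SA)ᴴ * (SB * SA) = SA * (R2ᴴ * R2) * SA := by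
    rw [conjTranspose_mul, hSAH, hSBH, Matrix.mul_assoc, ← Matrix.mul_assoc SB SB SA,
      hSB2, ← Matrix.mul_assoc]
  obtain ⟨W, hW, -, hWc, -⟩ := polar (SB * SA)
  obtain ⟨P, hP⟩ : ∃ X, X = psqrt ((SB * SA)ᴴ * (SB * SA)) := ⟨_, rfl⟩
  rw [← hP] at hW
  have hSBSB : (SA * (R2ᴴ * R2) * SA).PosSemidef := by
    have := hB.mul_mul_conjTranspose_same SA
    rwa [hSAH] at this
  have hPpsd : P.PosSemidef := by rw [hP, hTT]; exact psqrt_posSemidef hSBSB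
  obtain ⟨Q, hQ⟩ : ∃ X, X = psqrt P := ⟨_, rfl⟩
  have hQpsd : Q.PosSemidef := by rw [hQ]; exact psqrt_posSemidef hPpsd
  have hQH : Qᴴ = Q := by rw [hQ]; exact psqrt_herm hPpsd
  have hQ2 : Q * Q = P := by rw [hQ]; exact psqrt_mul_self hPpsd
  have hX : R1ᴴ * R2 = SA * (K * SB) := by
    rw [hV1, hV2, conjTranspose_mul, hSAH, hK]
    simp only [Matrix.mul_assoc]
  have htr : (R1ᴴ * R2).trace = (Qᴴ * (K * (W * Q))).trace := by
    rw [hX, hQH, Matrix.trace_mul_comm]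
    rw [show K * SB * SA = K * (W * P) from by rw [Matrix.mul_assoc, hW]]
    rw [show K * (W * P) = K * (W * Q) * Q from by rw [← hQ2]; noncomm_ring]
    rw [Matrix.trace_mul_comm]
  have hMwc : (1 - (K * W)ᴴ * (K * W)).PosSemidef := by
    have h1 : (Wᴴ * (1 - Kᴴ * K) * W).PosSemidef := hKc.conjTranspose_mul_mul_same W
    have heq : 1 - (K * W)ᴴ * (K * W) = Wᴴ * (1 - Kᴴ * K) * W + (1 - Wᴴ * W) := by
      rw [conjTranspose_mul]; noncomm_ring
    rw [heq]; exact h1.add hWc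
  have hYle : (((K * (W * Q))ᴴ * (K * (W * Q))).trace).re ≤ P.trace.re := by
    have hdiff : (Qᴴ * (1 - (K * W)ᴴ * (K * W)) * Q).PosSemidef :=
      hMwc.conjTranspose_mul_mul_same Q
    have heq : Qᴴ * (1 - (K * W)ᴴ * (K * W)) * Q
        = P - (K * (W * Q))ᴴ * (K * (W * Q)) := by
      rw [hQH, ← hQ2]
      rw [show (K * (W * Q))ᴴ = Qᴴ * (Wᴴ * Kᴴ) from by
        rw [conjTranspose_mul, conjTranspose_mul, Matrix.mul_assoc]]
      rw [hQH, conjTranspose_mul]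
      noncomm_ring
    have h0 := trace_re_nonneg hdiff
    rw [heq, Matrix.trace_sub, Complex.sub_re] at h0
    linarith
  have hfid : fidelity (R1ᴴ * R1) (R2ᴴ * R2) = P.trace.re := by
    rw [fidelity, ← hSA, hP, hTT]
  rw [hfid]
  calc ((R1ᴴ * R2).trace).re ≤ ‖(R1ᴴ * R2).trace‖ := Complex.re_le_norm _
    _ = ‖(Qᴴ * (K * (W * Q))).trace‖ := by rw [htr]
    _ ≤ Real.sqrt ((Qᴴ * Q).trace.re) *
        Real.sqrt (((K * (W * Q))ᴴ * (K * (W * Q))).trace.re) := trace_cauchy_schwarz _ _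
    _ ≤ Real.sqrt (P.trace.re) * Real.sqrt (P.trace.re) := by
        rw [hQH, hQ2]
        exact mul_le_mul_of_nonneg_left (Real.sqrt_le_sqrt hYle) (Real.sqrt_nonneg _)
    _ = P.trace.re := Real.mul_self_sqrt (trace_re_nonneg hPpsd)


lemma trace_fromBlocks (A : Matrix l l ℂ) (B C : Matrix l l ℂ) (D : Matrix l l ℂ) :
    (fromBlocks A B C D).trace = A.trace + D.trace := by
  simp [Matrix.trace, Fintype.sum_sum_type, Matrix.diag]

lemma posSemidef_fromBlocks11 {C : Matrix l l ℂ} (hC : C.PosSemidef) :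
    (fromBlocks C 0 0 (0 : Matrix l l ℂ)).PosSemidef := by
  have h : fromBlocks C 0 0 (0 : Matrix l l ℂ)
      = (fromBlocks (psqrt C) 0 0 0)ᴴ * (fromBlocks (psqrt C) 0 0 0) := by
    rw [fromBlocks_conjTranspose, fromBlocks_multiply]
    simp [psqrt_herm hC, psqrt_mul_self hC]
  rw [h]
  exact posSemidef_conjTranspose_mul_self _
lemma posSemidef_fromBlocks22 {C : Matrix l l ℂ} (hC : C.PosSemidef) :
    (fromBlocks (0 : Matrix l l ℂ) (0 : Matrix l l ℂ) (0 : Matrix l l ℂ) C).PosSemidef := by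
  have h : fromBlocks (0 : Matrix l l ℂ) 0 0 C
      = (fromBlocks (0 : Matrix l l ℂ) (0 : Matrix l l ℂ) (0 : Matrix l l ℂ) (psqrt C))ᴴ
        * (fromBlocks (0 : Matrix l l ℂ) (0 : Matrix l l ℂ) (0 : Matrix l l ℂ) (psqrt C)) := by
    rw [fromBlocks_conjTranspose, fromBlocks_multiply]
    simp [psqrt_herm hC, psqrt_mul_self hC]
  rw [h]
  exact posSemidef_conjTranspose_mul_self _

lemma psqrt_fromBlocks11 {A : Matrix l l ℂ} (hA : A.PosSemidef) :
    psqrt (fromBlocks A 0 0 (0 : Matrix l l ℂ)) = fromBlocks (psqrt A) 0 0 0 := by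
  refine psqrt_unique (posSemidef_fromBlocks11 (psqrt_posSemidef hA)) ?_
  rw [fromBlocks_multiply]
  simp [psqrt_mul_self hA]

lemma fidelity_fromBlocks {A B : Matrix l l ℂ} (hA : A.PosSemidef) (hB : B.PosSemidef) :
    fidelity (fromBlocks A 0 0 (0 : Matrix l l ℂ)) (fromBlocks B 0 0 0) = fidelity A B := by
  have hSAB : (psqrt A * B * psqrt A).PosSemidef := by
    have := hB.mul_mul_conjTranspose_same (psqrt A)
    rwa [psqrt_herm hA] at this
  rw [fidelity, fidelity, psqrt_fromBlocks11 hA, fromBlocks_multiply, fromBlocks_multiply]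
  simp only [Matrix.mul_zero, Matrix.zero_mul, add_zero, zero_add, Matrix.mul_one]
  rw [psqrt_fromBlocks11 hSAB, trace_fromBlocks]
  simp

/-- Achievability. -/
lemma exists_opt {A B : Matrix l l ℂ} (hA : A.PosSemidef) (hB : B.PosSemidef) :
    ∃ X : Matrix l l ℂ, (fromBlocks A X Xᴴ B).PosSemidef ∧ X.trace.re = fidelity A B := by
  obtain ⟨S0, hS0⟩ : ∃ X, X = psqrt A := ⟨_, rfl⟩
  obtain ⟨S1, hS1⟩ : ∃ X, X = psqrt B := ⟨_, rfl⟩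
  have hS0H : S0ᴴ = S0 := by rw [hS0]; exact psqrt_herm hA
  have hS1H : S1ᴴ = S1 := by rw [hS1]; exact psqrt_herm hB
  have hS02 : S0 * S0 = A := by rw [hS0]; exact psqrt_mul_self hA
  have hS12 : S1 * S1 = B := by rw [hS1]; exact psqrt_mul_self hB
  have hTT : (S1 * S0)ᴴ * (S1 * S0) = S0 * B * S0 := by
    rw [conjTranspose_mul, hS0H, hS1H, Matrix.mul_assoc, ← Matrix.mul_assoc S1 S1 S0,
      hS12, ← Matrix.mul_assoc]
  obtain ⟨V, hV, hVVP, -, hVVc⟩ := polar (S1 * S0)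
  obtain ⟨P, hP⟩ : ∃ X, X = psqrt ((S1 * S0)ᴴ * (S1 * S0)) := ⟨_, rfl⟩
  rw [← hP] at hV hVVP
  refine ⟨S0 * Vᴴ * S1, ?_, ?_⟩
  · -- positivity of the block matrix
    have hsum : fromBlocks A (S0 * Vᴴ * S1) (S0 * Vᴴ * S1)ᴴ B
        = (fromBlocks S0 (Vᴴ * S1) 0 0)ᴴ * (fromBlocks S0 (Vᴴ * S1) 0 0)
          + fromBlocks 0 0 0 (S1 * (1 - V * Vᴴ) * S1) := by
      rw [fromBlocks_conjTranspose, fromBlocks_multiply, fromBlocks_add, fromBlocks_inj]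
      refine ⟨?_, ?_, ?_, ?_⟩
      · simp [hS0H, hS02]
      · simp [hS0H, Matrix.mul_assoc]
      · simp [conjTranspose_mul, conjTranspose_conjTranspose, hS0H, Matrix.mul_assoc]
      · rw [conjTranspose_mul, conjTranspose_conjTranspose, hS1H, ← hS12]
        noncomm_ring
    rw [hsum]
    refine (posSemidef_conjTranspose_mul_self _).add (posSemidef_fromBlocks22 ?_)
    have := hVVc.mul_mul_conjTranspose_same S1
    rwa [hS1H] at this
  · have htr : (S0 * Vᴴ * S1).trace = P.trace := by
      rw [Matrix.trace_mul_cycle, Matrix.trace_mul_comm]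
      rw [show Vᴴ * (S1 * S0) = P from by rw [hV, ← Matrix.mul_assoc, hVVP]]
    rw [htr, fidelity, hP, hTT, hS0]


/-- Hardness for block matrices. -/
lemma block_le {A B X : Matrix l l ℂ} (hM : (fromBlocks A X Xᴴ B).PosSemidef) :
    X.trace.re ≤ fidelity A B := by
  have hA : A.PosSemidef := by
    have h := hM.submatrix Sum.inl
    have he : (fromBlocks A X Xᴴ B).submatrix Sum.inl Sum.inl = A := by
      ext i j; simp [fromBlocks]
    rwa [he] at h
  have hB : B.PosSemidef := by
    have h := hM.submatrix Sum.inr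
    have he : (fromBlocks A X Xᴴ B).submatrix Sum.inr Sum.inr = B := by
      ext i j; simp [fromBlocks]
    rwa [he] at h
  obtain ⟨R, hR⟩ : ∃ Y, Y = psqrt (fromBlocks A X Xᴴ B) := ⟨_, rfl⟩
  have hRH : Rᴴ = R := by rw [hR]; exact psqrt_herm hM
  have hRR : Rᴴ * R = fromBlocks A X Xᴴ B := by
    rw [hRH, hR]; exact psqrt_mul_self hM
  obtain ⟨J1, hJ1⟩ : ∃ Y, Y = fromBlocks (1 : Matrix l l ℂ) 0 0 (0 : Matrix l l ℂ) := ⟨_, rfl⟩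
  obtain ⟨J2, hJ2⟩ : ∃ Y, Y = fromBlocks (0 : Matrix l l ℂ) 0 1 (0 : Matrix l l ℂ) := ⟨_, rfl⟩
  have hJ1H : J1ᴴ = J1 := by
    rw [hJ1, fromBlocks_conjTranspose]; simp
  have hJ2H : J2ᴴ = fromBlocks (0 : Matrix l l ℂ) 1 0 (0 : Matrix l l ℂ) := by
    rw [hJ2, fromBlocks_conjTranspose]; simp
  have e1 : (R * J1)ᴴ * (R * J1) = fromBlocks A 0 0 0 := by
    rw [conjTranspose_mul, hJ1H,
      show J1 * Rᴴ * (R * J1) = J1 * (Rᴴ * R * J1) from by noncomm_ring, hRR]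
    rw [hJ1, fromBlocks_multiply, fromBlocks_multiply]
    simp
  have e2 : (R * J2)ᴴ * (R * J2) = fromBlocks B 0 0 0 := by
    rw [conjTranspose_mul,
      show J2ᴴ * Rᴴ * (R * J2) = J2ᴴ * (Rᴴ * R * J2) from by noncomm_ring, hRR]
    rw [hJ2H, hJ2, fromBlocks_multiply, fromBlocks_multiply]
    simp
  have e3 : (R * J1)ᴴ * (R * J2) = fromBlocks X 0 0 0 := by
    rw [conjTranspose_mul, hJ1H,
      show J1 * Rᴴ * (R * J2) = J1 * (Rᴴ * R * J2) from by noncomm_ring, hRR]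
    rw [hJ1, hJ2, fromBlocks_multiply, fromBlocks_multiply]
    simp
  have hk := key (R * J1) (R * J2)
  rw [e1, e2, e3, trace_fromBlocks, fidelity_fromBlocks hA hB] at hk
  simpa using hk

variable {m n : Type*} [Fintype m] [Fintype n] [DecidableEq m] [DecidableEq n]

noncomputable def emb (k₀ : n) : Matrix (m × n) m ℂ :=
  Matrix.of fun p i => if p = (i, k₀) then 1 else 0

lemma ptrace_eq_sum (A : Matrix (m × n) (m × n) ℂ) :
    ptraceRight A = ∑ k₀ : n, (emb (m := m) k₀)ᴴ * A * emb (m := m) k₀ := by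
  ext i j
  rw [Matrix.sum_apply, ptraceRight]
  simp only [Matrix.of_apply]
  refine Finset.sum_congr rfl fun k₀ _ => ?_
  have h1 : ∀ q, ((emb (m := m) k₀)ᴴ * A) i q = A (i, k₀) q := by
    intro q
    rw [mul_apply]
    simp only [conjTranspose_apply, emb, Matrix.of_apply, apply_ite (star : ℂ → ℂ), star_one,
      star_zero, ite_mul, one_mul, zero_mul]
    rw [Finset.sum_ite_eq' Finset.univ ((i, k₀) : m × n) (fun p => A p q)]
    simp
  rw [mul_apply]
  simp only [h1]
  simp only [emb, Matrix.of_apply, mul_ite, mul_one, mul_zero]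
  rw [Finset.sum_ite_eq' Finset.univ ((j, k₀) : m × n) (fun q => A (i, k₀) q)]
  simp

lemma sum_fromBlocks {ι : Type*} (s : Finset ι)
    (f g h i : ι → Matrix m m ℂ) :
    ∑ x ∈ s, fromBlocks (f x) (g x) (h x) (i x)
      = fromBlocks (∑ x ∈ s, f x) (∑ x ∈ s, g x) (∑ x ∈ s, h x) (∑ x ∈ s, i x) := by
  ext p q
  cases p <;> cases q <;> simp [Matrix.sum_apply]

lemma ptrace_block {A X Y B : Matrix (m × n) (m × n) ℂ}
    (h : (fromBlocks A X Y B).PosSemidef) :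
    (fromBlocks (ptraceRight A) (ptraceRight X) (ptraceRight Y)
      (ptraceRight B)).PosSemidef := by
  have hrw : fromBlocks (ptraceRight A) (ptraceRight X) (ptraceRight Y) (ptraceRight B)
      = ∑ k₀ : n, (fromBlocks (emb (m := m) k₀) 0 0 (emb (m := m) k₀))ᴴ * (fromBlocks A X Y B)
          * (fromBlocks (emb (m := m) k₀) 0 0 (emb (m := m) k₀)) := by
    rw [ptrace_eq_sum A, ptrace_eq_sum X, ptrace_eq_sum Y, ptrace_eq_sum B, ← sum_fromBlocks]
    refine Finset.sum_congr rfl fun k₀ _ => ?_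
    rw [fromBlocks_conjTranspose, fromBlocks_multiply, fromBlocks_multiply]
    simp
  rw [hrw]
  exact Finset.sum_induction _ _ (fun a b ha hb => ha.add hb) .zero
    (fun k₀ _ => h.conjTranspose_mul_mul_same _)

lemma ptrace_conjTranspose (X : Matrix (m × n) (m × n) ℂ) :
    ptraceRight (Xᴴ) = (ptraceRight X)ᴴ := by
  ext i j
  simp [ptraceRight, conjTranspose_apply, star_sum]

lemma ptrace_trace (X : Matrix (m × n) (m × n) ℂ) :
    (ptraceRight X).trace = X.trace := by
  rw [Matrix.trace, Matrix.trace, Fintype.sum_prod_type]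
  simp [ptraceRight, Matrix.diag]


end FidAux

/-- Monotonicity of fidelity under partial trace. -/
theorem fidelity_le_fidelity_ptrace
    {m n : Type*} [Fintype m] [Fintype n] [DecidableEq m] [DecidableEq n]
    (ρ0 ρ1 : Matrix (m × n) (m × n) ℂ)
    (h0 : ρ0.PosSemidef) (h0t : ρ0.trace = 1)
    (h1 : ρ1.PosSemidef) (h1t : ρ1.trace = 1) :
    fidelity ρ0 ρ1 ≤ fidelity (ptraceRight ρ0) (ptraceRight ρ1) := by
  obtain ⟨X, hblk, htr⟩ := FidAux.exists_opt h0 h1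
  have hN := FidAux.ptrace_block hblk
  rw [FidAux.ptrace_conjTranspose] at hN
  have hle := FidAux.block_le hN
  rw [FidAux.ptrace_trace] at hle
  rw [← htr]
  exact hle
end
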